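/- Let S be a numerical semigroup of multiplicity 4 with Apéry set {0, a_1, a_2, a_3} satisfying a_3 = a_1 + a_2, and let R = k[S] over a field k. The multiset resolution F′_• of k over R is minimal, i.e., ∂(F′_d) ⊆ 𝔪·F′_{d−1} for all d ≥ 1, if and only if b_{11} > 0, that is, if and only if 2a_1 > a_2. (Theorem 4.1, second assertion.) -/

import Mathlib

open Polynomial CategoryTheory

set_option synthInstance.maxHeartbeats 1000000
set_option maxHeartbeats 1600000


/-- A numerical semigroup: a cofinite additive submonoid of `ℕ`. -/
structure NumericalSemigroup where
  carrier : AddSubmonoid ℕ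
  cofinite : ((carrier : Set ℕ))ᶜ.Finite

namespace NumericalSemigroup

/-- The multiplicity `m = min (S \ {0})`. -/
noncomputable def mult (S : NumericalSemigroup) : ℕ :=
  sInf {n | n ∈ S.carrier ∧ n ≠ 0}

/-- `apery S i` is the smallest element of `S` congruent to `i` mod `m`. -/
noncomputable def apery (S : NumericalSemigroup) (i : ℕ) : ℕ :=
  sInf {n | n ∈ S.carrier ∧ n % S.mult = i % S.mult}

lemma exists_bound (S : NumericalSemigroup) : ∃ N, ∀ n, N ≤ n → n ∈ S.carrier := by
  obtain ⟨C, hC⟩ := S.cofinite.bddAbove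
  refine ⟨C + 1, fun n hn => ?_⟩
  by_contra h
  exact absurd (hC h) (by omega)

lemma mult_spec (S : NumericalSemigroup) : S.mult ∈ S.carrier ∧ S.mult ≠ 0 := by
  obtain ⟨N, hN⟩ := S.exists_bound
  have h : {n | n ∈ S.carrier ∧ n ≠ 0}.Nonempty := ⟨N + 1, hN _ (by omega), by omega⟩
  exact Nat.sInf_mem h

lemma apery_spec (S : NumericalSemigroup) (i : ℕ) :
    S.apery i ∈ S.carrier ∧ S.apery i % S.mult = i % S.mult := by
  obtain ⟨N, hN⟩ := S.exists_bound
  have hm : S.mult ≠ 0 := S.mult_spec.2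
  have h : {n | n ∈ S.carrier ∧ n % S.mult = i % S.mult}.Nonempty := by
    refine ⟨i % S.mult + S.mult * (N + 1), hN _ ?_, ?_⟩
    · have h1 : 1 ≤ S.mult := Nat.one_le_iff_ne_zero.mpr hm
      have : N + 1 ≤ S.mult * (N + 1) := Nat.le_mul_of_pos_left _ h1
      omega
    · simp [Nat.add_mul_mod_self_left, Nat.mod_mod_of_dvd]
  exact Nat.sInf_mem h

/-- The Apéry numbers `a_i` for `i ∈ ℤ/m`, with the convention `a_0 = m`. -/
noncomputable def a (S : NumericalSemigroup) (i : ZMod S.mult) : ℕ :=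
  if i = 0 then S.mult else S.apery i.val

lemma a_mem (S : NumericalSemigroup) (i : ZMod S.mult) : S.a i ∈ S.carrier := by
  unfold a; split
  · exact S.mult_spec.1
  · exact (S.apery_spec _).1

/-- The quantities `b_{ij} = (a_i + a_j - a_{i+j})/m`. -/
noncomputable def b (S : NumericalSemigroup) (i j : ZMod S.mult) : ℕ :=
  (S.a i + S.a j - S.a (i + j)) / S.mult

/-- The semigroup algebra `k[S]`, realized as the subalgebra of `k[t]`
spanned by the monomials `t^s` with `s ∈ S`. -/
def toRing (k : Type) [Field k] (S : NumericalSemigroup) : Subalgebra k (Polynomial k) where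
  carrier := {p | ∀ n, p.coeff n ≠ 0 → n ∈ S.carrier}
  add_mem' := by
    intro p q hp hq n h
    rw [Set.mem_setOf_eq] at hp hq
    by_contra hn
    have h1 : (p : Polynomial k).coeff n = 0 := by by_contra hc; exact hn (hp n hc)
    have h2 : (q : Polynomial k).coeff n = 0 := by by_contra hc; exact hn (hq n hc)
    simp [coeff_add, h1, h2] at h
  mul_mem' := by
    intro p q hp hq n h
    rw [Set.mem_setOf_eq] at hp hq
    rw [Polynomial.coeff_mul] at h
    obtain ⟨⟨u, v⟩, huv, hne⟩ := Finset.exists_ne_zero_of_sum_ne_zero h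
    obtain ⟨h1, h2⟩ := mul_ne_zero_iff.mp hne
    have : u + v = n := Finset.HasAntidiagonal.mem_antidiagonal.mp huv
    exact this ▸ S.carrier.add_mem (hp u h1) (hq v h2)
  algebraMap_mem' := by
    intro r n h
    have : n = 0 := by
      by_contra hn
      simp [Polynomial.coeff_C, hn] at h
    exact this ▸ S.carrier.zero_mem

variable (k : Type) [Field k] (S : NumericalSemigroup)

/-- The monomial `x_j = t^{a_j}` as an element of `k[S]`. -/
noncomputable def xv (j : ZMod S.mult) : S.toRing k :=
  ⟨X ^ S.a j, by
    intro n h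
    have : n = S.a j := by
      by_contra hn
      simp [coeff_X_pow, hn] at h
    exact this ▸ S.a_mem j⟩

/-- The augmentation `k[S] → k = k[S]/𝔪`, given by the constant coefficient. -/
noncomputable def aug : S.toRing k →+* k :=
  (Polynomial.constantCoeff).comp ((S.toRing k).val.toRingHom)

/-- The maximal ideal `𝔪` of `k[S]`. -/
noncomputable def mIdeal : Ideal (S.toRing k) :=
  RingHom.ker (S.aug k)

/-- The residue field `k = k[S]/𝔪` as a module over `k[S]`. -/
def ResMod (_S : NumericalSemigroup) : Type := k

noncomputable instance : AddCommGroup (ResMod k S) := inferInstanceAs (AddCommGroup k)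
noncomputable instance : Module (S.toRing k) (ResMod k S) := Module.compHom k (S.aug k)

/-- `dim_k Tor_i^{k[S]}(k, k)` as a cardinal. -/
noncomputable def torDim (i : ℕ) : Cardinal :=
  Module.rank k (RestrictScalars k (S.toRing k)
    (((Tor (ModuleCat (S.toRing k)) i).obj
        (ModuleCat.of (S.toRing k) (ResMod k S))).obj
      (ModuleCat.of (S.toRing k) (ResMod k S))))


/-- The monomial `x_i = t^{a_i}` in `k[S]`, indexed by the residue `i ∈ ℕ`. -/
noncomputable def xa (i : ℕ) : S.toRing k :=
  ⟨X ^ S.apery i, by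
    intro n h
    have : n = S.apery i := by
      by_contra hn
      simp [coeff_X_pow, hn] at h
    exact this ▸ (S.apery_spec i).1⟩

/-- The monomial `y = t^m` in `k[S]`. -/
noncomputable def yv : S.toRing k :=
  ⟨X ^ S.mult, by
    intro n h
    have : n = S.mult := by
      by_contra hn
      simp [coeff_X_pow, hn] at h
    exact this ▸ S.mult_spec.1⟩

/-- Multisets of elements of `{0,1,2}` of cardinality `d` with at most one `0`,
encoded as triples `(c₀, c₁, c₂)` of multiplicities. -/
def MSIdx (d : ℕ) : Type :=
  {c : ℕ × ℕ × ℕ // c.1 ≤ 1 ∧ c.1 + c.2.1 + c.2.2 = d}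

/-- The basis vector `e'_c`, interpreted as `0` if `c₀ > 1` or `|c| ≠ d` (this encodes
the conventions `e'_c = 0` for `c₀ > 1` and `e'_{c - i} = 0` for `c_i = 0`). -/
noncomputable def Ems (d : ℕ) (c : ℕ × ℕ × ℕ) : MSIdx d →₀ S.toRing k :=
  if h : c.1 ≤ 1 ∧ c.1 + c.2.1 + c.2.2 = d then Finsupp.single ⟨c, h⟩ 1 else 0

/-- `b₁₁ = (2a₁ - a₂)/4`. -/
noncomputable def b11 : ℕ := (2 * S.apery 1 - S.apery 2) / 4

/-- `b₂₂ = (2a₂ - 4)/4`. -/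
noncomputable def b22 : ℕ := (2 * S.apery 2 - 4) / 4

/-- The differential `∂ : F'_{d+1} → F'_d` of the multiset complex. -/
noncomputable def delMS (d : ℕ) :
    (MSIdx (d + 1) →₀ S.toRing k) →ₗ[S.toRing k] (MSIdx d →₀ S.toRing k) :=
  Finsupp.lift (MSIdx d →₀ S.toRing k) (S.toRing k) (MSIdx (d + 1)) fun c =>
    S.xa k 2 • S.Ems k d (c.1.1, c.1.2.1, c.1.2.2 - 1)
      + (if c.1.2.2 % 2 = 0 then
          S.xa k 1 • S.Ems k d (c.1.1, c.1.2.1 - 1, c.1.2.2)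
            - (S.yv k ^ S.b11) • S.Ems k d (c.1.1, c.1.2.1 - 2, c.1.2.2 + 1)
        else -(S.xa k 1 • S.Ems k d (c.1.1, c.1.2.1 - 1, c.1.2.2)))
      + ((-1 : S.toRing k) ^ d) •
          (S.yv k • S.Ems k d (c.1.1 - 1, c.1.2.1, c.1.2.2)
            + (S.yv k ^ S.b22) • S.Ems k d (c.1.1 + 1, c.1.2.1, c.1.2.2 - 2))

noncomputable instance : One (ResMod k S) := inferInstanceAs (One k)

/-- The augmentation `F'_0 = R → k = R/𝔪`. -/
noncomputable def augMS : (MSIdx 0 →₀ S.toRing k) →ₗ[S.toRing k] ResMod k S :=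
  Finsupp.lift (ResMod k S) (S.toRing k) (MSIdx 0) fun _ => (1 : ResMod k S)


section Aux

variable {k : Type} [Field k] {S : NumericalSemigroup}

lemma mem_mIdeal_iff (x : S.toRing k) :
    x ∈ S.mIdeal k ↔ (x : Polynomial k).coeff 0 = 0 := by
  simp [mIdeal, RingHom.mem_ker, aug, Polynomial.constantCoeff_apply]

lemma yv_mem (hm : S.mult ≠ 0) : S.yv k ∈ S.mIdeal k := by
  rw [mem_mIdeal_iff]
  simp [yv, Polynomial.coeff_X_pow, (Ne.symm hm)]

lemma xa_mem {i : ℕ} (h : S.apery i ≠ 0) : S.xa k i ∈ S.mIdeal k := by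
  rw [mem_mIdeal_iff]
  simp [xa, Polynomial.coeff_X_pow, (Ne.symm h)]

lemma coord_mem {R : Type*} [CommRing R] {α : Type*} (I : Ideal R) {z : α →₀ R} (i : α)
    (h : z ∈ I • (⊤ : Submodule R (α →₀ R))) : z i ∈ I := by
  refine Submodule.smul_induction_on h (fun r hr n _ => ?_) (fun x y hx hy => ?_)
  · simpa using I.mul_mem_right _ hr
  · simpa using I.add_mem hx hy

lemma apery_mod (hm : S.mult = 4) (i : ℕ) : S.apery i % 4 = i % 4 := by
  have h := (S.apery_spec i).2
  rwa [hm] at h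

lemma apery_ne_mult_le (hm : S.mult = 4) {i : ℕ} (h : S.apery i ≠ 0) : 4 ≤ S.apery i := by
  have h1 : S.apery i ∈ {n | n ∈ S.carrier ∧ n ≠ 0} := ⟨(S.apery_spec i).1, h⟩
  have := Nat.sInf_le h1
  rw [show sInf {n | n ∈ S.carrier ∧ n ≠ 0} = S.mult from rfl, hm] at this
  exact this

end Aux

/-- **Theorem 4.1 (second assertion).** For `S` of multiplicity 4 with `a₃ = a₁ + a₂`,
the multiset resolution `F'_•` of `k` over `R = k[S]` is minimal, i.e.
`∂(F'_d) ⊆ 𝔪·F'_{d-1}` for all `d ≥ 1`, if and only if `b₁₁ > 0`, that is, `2a₁ > a₂`. -/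
theorem multiset_resolution_minimal_iff (k : Type) [Field k] (S : NumericalSemigroup)
    (hm : S.mult = 4) (h3 : S.apery 3 = S.apery 1 + S.apery 2) :
    (∀ d : ℕ, LinearMap.range (S.delMS k d) ≤
      S.mIdeal k • (⊤ : Submodule (S.toRing k) (MSIdx d →₀ S.toRing k))) ↔
    S.apery 2 < 2 * S.apery 1 := by
  have ha1 : S.apery 1 % 4 = 1 := by have := apery_mod hm 1; omega
  have ha2 : S.apery 2 % 4 = 2 := by have := apery_mod hm 2; omega
  have ha1ne : S.apery 1 ≠ 0 := by omega
  have ha2ne : S.apery 2 ≠ 0 := by omega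
  have ha2ge : 4 ≤ S.apery 2 := apery_ne_mult_le hm ha2ne
  constructor
  · intro hmin
    by_contra hlt
    push_neg at hlt
    have hb11 : S.b11 = 0 := by unfold b11; omega
    set c : MSIdx 2 := ⟨(0, 2, 0), by decide⟩ with hcdef
    have hz : S.delMS k 1 (Finsupp.single c 1) ∈
        S.mIdeal k • (⊤ : Submodule (S.toRing k) (MSIdx 1 →₀ S.toRing k)) :=
      hmin 1 ⟨_, rfl⟩
    have hval : (S.delMS k 1 (Finsupp.single c 1)) (⟨(0, 0, 1), by decide⟩ : MSIdx 1)
        = -(1 : S.toRing k) := by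
      simp only [delMS, Finsupp.lift_apply, hb11, pow_zero]
      rw [Finsupp.sum_single_index (by simp)]
      simp only [hcdef, Ems, one_smul]
      norm_num
      show ((S.xa k 1 • Finsupp.single (⟨(0, 1, 0), by decide⟩ : MSIdx 1) (1 : S.toRing k)
        - Finsupp.single (⟨(0, 0, 1), by decide⟩ : MSIdx 1) (1 : S.toRing k) : MSIdx 1 →₀ S.toRing k)
        (⟨(0, 0, 1), by decide⟩ : MSIdx 1)) = -1
      rw [Finsupp.sub_apply, Finsupp.smul_apply, Finsupp.single_eq_same, Finsupp.single_eq_of_ne' fun h => by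
        have := congrArg Subtype.val h
        simp at this]
      simp
    have hcoord2 : (-(1 : S.toRing k)) ∈ S.mIdeal k := by
      rw [← hval]
      exact coord_mem _ _ hz
    rw [mem_mIdeal_iff] at hcoord2
    apply one_ne_zero (α := k)
    simp at hcoord2
  · intro hlt d
    rintro x ⟨u, rfl⟩
    have hb11 : 0 < S.b11 := by unfold b11; omega
    have hb22 : 0 < S.b22 := by unfold b22; omega
    have hx1 : S.xa k 1 ∈ S.mIdeal k := xa_mem ha1ne
    have hx2 : S.xa k 2 ∈ S.mIdeal k := xa_mem ha2ne
    have hy : S.yv k ∈ S.mIdeal k := yv_mem (by omega)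
    have hy11 : S.yv k ^ S.b11 ∈ S.mIdeal k := (S.mIdeal k).pow_mem_of_mem hy _ hb11
    have hy22 : S.yv k ^ S.b22 ∈ S.mIdeal k := (S.mIdeal k).pow_mem_of_mem hy _ hb22
    simp only [delMS, Finsupp.lift_apply, Finsupp.sum]
    refine Submodule.sum_mem _ fun c hc => Submodule.smul_mem _ _ ?_
    refine Submodule.add_mem _ (Submodule.add_mem _ ?_ ?_) ?_
    · exact Submodule.smul_mem_smul hx2 Submodule.mem_top
    · split
      · exact Submodule.sub_mem (M := MSIdx d →₀ S.toRing k) (p := S.mIdeal k • ⊤)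
          (Submodule.smul_mem_smul hx1 Submodule.mem_top)
          (Submodule.smul_mem_smul hy11 Submodule.mem_top)
      · exact Submodule.neg_mem (M := MSIdx d →₀ S.toRing k) (p := S.mIdeal k • ⊤)
          (Submodule.smul_mem_smul hx1 Submodule.mem_top)
    · exact Submodule.smul_mem (M := MSIdx d →₀ S.toRing k) (S.mIdeal k • ⊤) _
        (Submodule.add_mem _ (Submodule.smul_mem_smul hy Submodule.mem_top)
          (Submodule.smul_mem_smul hy22 Submodule.mem_top))

end NumericalSemigroup
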